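/- Let G = (V, E) be a finite directed acyclic graph and let φ : (V → ℝ) → (V → ℝ) be such that for every vertex v, whenever x, x' : V → ℝ agree at every strict ancestor of v (every vertex that is the source of some path with target v), then φ(x)(v) = φ(x')(v). Then φ has a unique fixed point. -/

import Mathlib

/-- The one-step edge relation of a graph with edge type `E`, vertex type `V`,
and source/target maps `src, tgt : E → V`: there is an edge from `u` to `v`. -/
def EdgeRel {V E : Type} (src tgt : E → V) : V → V → Prop :=
  fun u v => ∃ e : E, src e = u ∧ tgt e = v

/-- `u` is a strict ancestor of `v` iff there is a (nonempty) path from `u` to `v`,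
i.e. `Relation.TransGen (EdgeRel src tgt) u v`.  A graph is acyclic iff no path has equal
source and target. -/
theorem stmt3 {V E : Type} [Fintype V] [Fintype E]
    (src tgt : E → V)
    (hacyc : ∀ v : V, ¬ Relation.TransGen (EdgeRel src tgt) v v)
    (φ : (V → ℝ) → (V → ℝ))
    (hφ : ∀ (v : V) (x x' : V → ℝ),
      (∀ u : V, Relation.TransGen (EdgeRel src tgt) u v → x u = x' u) →
      φ x v = φ x' v) :
    ∃! x : V → ℝ, φ x = x := by
  set r : V → V → Prop := Relation.TransGen (EdgeRel src tgt) with hr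
  have htrans : Transitive r := fun a b c => Relation.TransGen.trans
  have hirr : IsIrrefl V r := ⟨hacyc⟩
  have htr : IsTrans V r := ⟨fun a b c => Relation.TransGen.trans⟩
  classical
  have hwf : WellFounded r := Finite.wellFounded_of_trans_of_irrefl r
  -- construct the fixed point by well-founded recursion
  let x : V → ℝ := hwf.fix (fun v ih => φ (fun u => if h : r u v then ih u h else 0) v)
  have hx : ∀ v, x v = φ (fun u => if h : r u v then x u else 0) v := fun v => by
    exact hwf.fix_eq _ v
  have hfix : φ x = x := by
    funext v
    rw [hx v]
    exact hφ v x _ (fun u hu => by simp [dif_pos hu])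
  refine ⟨x, hfix, ?_⟩
  intro y hy
  funext v
  induction v using hwf.induction with
  | _ v ih =>
    calc y v = φ y v := by rw [hy]
    _ = φ x v := hφ v y x ih
    _ = x v := by rw [hfix]
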